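/- Suppose y₁, y₂, y₃ ≥ 0 satisfy y₁ + y₃ = 2y₂ + 2 and √y₂ ≥ 2·max{|y₁ − y₂|, |y₂ − y₃|, 1}. Then for every n ≥ 2 there exist three points x₁, x₂, x₃ ∈ ℝⁿ forming a copy of ℓ₃ (collinear, consecutive distances 1) with |xᵢ|² = yᵢ for i = 1, 2, 3. -/

import Mathlib

set_option maxHeartbeats 1000000 in
theorem stmt12 (y₁ y₂ y₃ : ℝ) (h1 : 0 ≤ y₁) (h2 : 0 ≤ y₂) (h3 : 0 ≤ y₃)
    (hsum : y₁ + y₃ = 2 * y₂ + 2)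
    (hbig : 2 * max (max |y₁ - y₂| |y₂ - y₃|) 1 ≤ Real.sqrt y₂) :
    ∀ n : ℕ, 2 ≤ n → ∃ x₁ x₂ x₃ : EuclideanSpace ℝ (Fin n),
      x₂ = midpoint ℝ x₁ x₃ ∧ dist x₁ x₂ = 1 ∧ dist x₂ x₃ = 1 ∧
      ‖x₁‖ ^ 2 = y₁ ∧ ‖x₂‖ ^ 2 = y₂ ∧ ‖x₃‖ ^ 2 = y₃ := by
  intro n hn
  set s := Real.sqrt y₂ with hs
  have hmax1 : (1:ℝ) ≤ max (max |y₁ - y₂| |y₂ - y₃|) 1 := le_max_right _ _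
  have hmaxa : |y₁ - y₂| ≤ max (max |y₁ - y₂| |y₂ - y₃|) 1 :=
    le_max_of_le_left (le_max_left _ _)
  have hs2 : (2:ℝ) ≤ s := by linarith
  have hspos : (0:ℝ) < s := by linarith
  have hssq : s ^ 2 = y₂ := Real.sq_sqrt h2
  set c := (y₂ + 1 - y₁) / (2 * s) with hc
  have h2sc : 2 * s * c = y₂ + 1 - y₁ := by
    rw [hc]; field_simp [hspos.ne']
  have habs : |y₁ - y₂| ≤ s / 2 := by nlinarith
  have habs' : -(s/2) ≤ y₁ - y₂ ∧ y₁ - y₂ ≤ s/2 := abs_le.mp habs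
  have hcub : c ≤ 1 := by nlinarith [habs'.1, habs'.2]
  have hclb : -1 ≤ c := by nlinarith [habs'.1, habs'.2]
  have hc1 : 0 ≤ 1 - c ^ 2 := by nlinarith
  set t := Real.sqrt (1 - c ^ 2) with ht
  have ht2 : t ^ 2 = 1 - c ^ 2 := Real.sq_sqrt hc1
  have i0 : Fin n := ⟨0, by omega⟩
  have i1 : Fin n := ⟨1, by omega⟩
  have hne : (⟨0, by omega⟩ : Fin n) ≠ ⟨1, by omega⟩ := by simp [Fin.ext_iff]
  set e0 : EuclideanSpace ℝ (Fin n) := EuclideanSpace.single ⟨0, by omega⟩ s with he0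
  set d : EuclideanSpace ℝ (Fin n) :=
    EuclideanSpace.single ⟨0, by omega⟩ c - EuclideanSpace.single ⟨1, by omega⟩ t with hd
  have hn2 : ‖e0‖ ^ 2 = y₂ := by
    rw [he0, EuclideanSpace.norm_single]
    rw [Real.norm_eq_abs, sq_abs, hssq]
  have hinner : inner ℝ e0 d = s * c := by
    rw [he0, hd, inner_sub_right]
    simp [EuclideanSpace.inner_single_left, EuclideanSpace.single_apply, hne, hne.symm]
  have hdd : inner ℝ d d = (1:ℝ) := by
    rw [hd, inner_sub_left, inner_sub_right, inner_sub_right]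
    simp only [EuclideanSpace.inner_single_left, EuclideanSpace.single_apply,
      RCLike.star_def, conj_trivial]
    simp [hne, hne.symm]
    nlinarith
  have hdnorm : ‖d‖ = 1 := by
    have h1' : ‖d‖ ^ 2 = 1 := by rw [← real_inner_self_eq_norm_sq, hdd]
    have := Real.sqrt_sq (norm_nonneg d)
    rw [h1'] at this
    simpa using this.symm
  refine ⟨e0 - d, e0, e0 + d, (midpoint_sub_add ℝ e0 d).symm, ?_, ?_, ?_, ?_, ?_⟩
  · simp [dist_eq_norm, hdnorm]
  · simp [dist_eq_norm, hdnorm]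
  · have := norm_sub_sq_real e0 d
    rw [hinner, hn2, hdnorm] at this
    rw [this]; linarith [h2sc]
  · exact hn2
  · have := norm_add_sq_real e0 d
    rw [hinner, hn2, hdnorm] at this
    rw [this]; linarith [h2sc]
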